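/- arXiv:2501.00695 — 4 statements merged into one kernel-verified Lean document; each statement's English description precedes it below -/
import Mathlib

section
/- For all real N×r matrices X, Y, A, B, the sum over all pairs (i,j) with 1 ≤ i < j ≤ N of tr(Xᵀ ℰ_{ij}ᵀ A) · tr(Yᵀ ℰ_{ij}ᵀ B) equals ⟨𝒜(A Xᵀ), 𝒜(B Yᵀ)⟩_F. -/
open Matrix BigOperators

/-- `ℰ_{ij} = (√2/2)(E_{ij} − E_{ji})` where `E_{ij}` is the matrix with a `1`
in entry `(i,j)` and `0` elsewhere. -/
noncomputable def calE (N : ℕ) (i j : Fin N) : Matrix (Fin N) (Fin N) ℝ :=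
  (Real.sqrt 2 / 2) • (Matrix.single i j (1 : ℝ) - Matrix.single j i (1 : ℝ))

/-- The Frobenius inner product `⟨A,B⟩_F = tr(Aᵀ B)`. -/
noncomputable def frob {N r : ℕ} (A B : Matrix (Fin N) (Fin r) ℝ) : ℝ := (Aᵀ * B).trace

/-- The skew-symmetrization `𝒜(A) = (A − Aᵀ)/2`. -/
noncomputable def skewPart {N : ℕ} (A : Matrix (Fin N) (Fin N) ℝ) : Matrix (Fin N) (Fin N) ℝ :=
  (1 / 2 : ℝ) • (A - Aᵀ)

lemma tr_calE (N r : ℕ) (X A : Matrix (Fin N) (Fin r) ℝ) (i j : Fin N) :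
    (Xᵀ * (calE N i j)ᵀ * A).trace
      = (Real.sqrt 2 / 2) * ((A*Xᵀ) i j - (A*Xᵀ) j i) := by
  simp [calE, Matrix.trace, Matrix.diag, Matrix.mul_apply, Matrix.single,
    Finset.sum_sub_distrib, Finset.mul_sum, Finset.sum_mul, ite_and, mul_comm, mul_sub, sub_mul]
  congr 1 <;> apply Finset.sum_congr rfl <;> intros <;> ring

lemma sum_skew (N : ℕ) (f : Fin N → Fin N → ℝ) (hsymm : ∀ i j, f j i = f i j)
    (hdiag : ∀ i, f i i = 0) :
    ∑ i : Fin N, ∑ j : Fin N, (if i < j then 2 * f i j else 0)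
      = ∑ i : Fin N, ∑ j : Fin N, f i j := by
  have h1 : ∀ i j : Fin N,
      f i j = (if i < j then f i j else 0) + (if j < i then f i j else 0) := by
    intro i j
    rcases lt_trichotomy i j with h | h | h
    · simp [h, not_lt_of_gt h]
    · subst h; simp [hdiag]
    · simp [h, not_lt_of_gt h]
  have hA : ∑ i : Fin N, ∑ j : Fin N, (if i < j then 2 * f i j else 0)
      = (∑ i : Fin N, ∑ j : Fin N, (if i < j then f i j else 0))
        + ∑ i : Fin N, ∑ j : Fin N, (if i < j then f i j else 0) := by
    rw [← Finset.sum_add_distrib]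
    apply Finset.sum_congr rfl; intro i _
    rw [← Finset.sum_add_distrib]
    apply Finset.sum_congr rfl; intro j _
    split_ifs <;> ring
  have hB : ∑ i : Fin N, ∑ j : Fin N, (if i < j then f i j else 0)
      = ∑ i : Fin N, ∑ j : Fin N, (if j < i then f i j else 0) := by
    rw [Finset.sum_comm]
    apply Finset.sum_congr rfl; intro i _
    apply Finset.sum_congr rfl; intro j _
    rw [hsymm]
  rw [hA]; nth_rewrite 2 [hB]; rw [← Finset.sum_add_distrib]
  apply Finset.sum_congr rfl; intro i _
  rw [← Finset.sum_add_distrib]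
  apply Finset.sum_congr rfl; intro j _
  exact (h1 i j).symm

theorem stmt_5 (N r : ℕ) (X Y A B : Matrix (Fin N) (Fin r) ℝ) :
    ∑ i : Fin N, ∑ j : Fin N,
      (if i < j then
        (Xᵀ * (calE N i j)ᵀ * A).trace * (Yᵀ * (calE N i j)ᵀ * B).trace
      else 0)
      = frob (skewPart (A * Xᵀ)) (skewPart (B * Yᵀ)) := by
  set S := skewPart (A * Xᵀ) with hS
  set T := skewPart (B * Yᵀ) with hT
  have hSapp : ∀ i j, S i j = (1/2 : ℝ) * ((A*Xᵀ) i j - (A*Xᵀ) j i) := by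
    intro i j; simp [hS, skewPart, Matrix.mul_apply, mul_comm]
  have hTapp : ∀ i j, T i j = (1/2 : ℝ) * ((B*Yᵀ) i j - (B*Yᵀ) j i) := by
    intro i j; simp [hT, skewPart, Matrix.mul_apply, mul_comm]
  have hL : ∑ i : Fin N, ∑ j : Fin N,
      (if i < j then
        (Xᵀ * (calE N i j)ᵀ * A).trace * (Yᵀ * (calE N i j)ᵀ * B).trace
      else 0)
      = ∑ i : Fin N, ∑ j : Fin N, (if i < j then 2 * (S i j * T i j) else 0) := by
    apply Finset.sum_congr rfl; intro i _
    apply Finset.sum_congr rfl; intro j _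
    split_ifs with h
    · rw [tr_calE, tr_calE, hSapp, hTapp]
      have h2 : Real.sqrt 2 ^ 2 = 2 := Real.sq_sqrt (by norm_num)
      ring_nf
      rw [h2]; ring
    · rfl
  rw [hL, sum_skew N (fun i j => S i j * T i j)]
  · rw [frob, Matrix.trace]
    rw [Finset.sum_comm]
    apply Finset.sum_congr rfl; intro j _
    simp [Matrix.diag, Matrix.mul_apply]
  · intro i j
    have h1 : S j i = - S i j := by rw [hSapp, hSapp]; ring
    have h2 : T j i = - T i j := by rw [hTapp, hTapp]; ring
    rw [h1, h2]; ring
  · intro i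
    have h1 : S i i = 0 := by rw [hSapp]; ring
    rw [h1]; ring
end

section
/- For all real N×r matrices X and Y, the sum over all pairs (i,j) with 1 ≤ i < j ≤ N of tr(Xᵀ ℰ_{ij}ᵀ Y) · tr(Xᵀ ℰ_{ij} Y) equals −‖𝒜(X Yᵀ)‖²_F. -/
open Matrix BigOperators

lemma trace_std {N r : ℕ} (i j : Fin N) (X Y : Matrix (Fin N) (Fin r) ℝ) :
    (Xᵀ * Matrix.single i j (1:ℝ) * Y).trace = (X * Yᵀ) i j := by
  rw [Matrix.trace_mul_cycle]
  simp [Matrix.trace, Matrix.mul_apply, Matrix.single, Matrix.diag,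
    Finset.mul_sum, mul_comm, ite_and, Finset.sum_ite_eq, Finset.sum_ite_eq']

lemma trace_calE {N r : ℕ} (i j : Fin N) (X Y : Matrix (Fin N) (Fin r) ℝ) :
    (Xᵀ * (calE N i j) * Y).trace
      = (Real.sqrt 2 / 2) * ((X * Yᵀ) i j - (X * Yᵀ) j i) := by
  simp only [calE, smul_sub, Matrix.mul_smul, Matrix.smul_mul, Matrix.sub_mul,
    Matrix.mul_sub, Matrix.trace_smul, Matrix.trace_sub, smul_eq_mul]
  rw [trace_std, trace_std]
  ring

lemma stdT {N : ℕ} (i j : Fin N) :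
    (Matrix.single i j (1:ℝ))ᵀ = Matrix.single j i (1:ℝ) := by
  ext a b
  simp [Matrix.single, and_comm]

lemma calE_transpose {N : ℕ} (i j : Fin N) : (calE N i j)ᵀ = -(calE N i j) := by
  simp only [calE, Matrix.transpose_smul, Matrix.transpose_sub, stdT, ← smul_neg, neg_sub]

lemma double_sum_lt {N : ℕ} (f : Fin N → Fin N → ℝ) (hsymm : ∀ i j, f i j = f j i)
    (hdiag : ∀ i, f i i = 0) :
    ∑ i : Fin N, ∑ j : Fin N, f i j
      = 2 * ∑ i : Fin N, ∑ j : Fin N, (if i < j then f i j else 0) := by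
  have h : ∀ i j : Fin N,
      f i j = (if i < j then f i j else 0) + (if j < i then f i j else 0) := by
    intro i j
    rcases lt_trichotomy i j with h | h | h
    · simp [h, not_lt_of_gt h]
    · simp [h, hdiag]
    · simp [h, not_lt_of_gt h]
  calc ∑ i : Fin N, ∑ j : Fin N, f i j
      = ∑ i : Fin N, ∑ j : Fin N,
          ((if i < j then f i j else 0) + (if j < i then f i j else 0)) := by
        simp_rw [← h]
    _ = (∑ i : Fin N, ∑ j : Fin N, (if i < j then f i j else 0))
        + ∑ i : Fin N, ∑ j : Fin N, (if j < i then f i j else 0) := by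
        simp [Finset.sum_add_distrib]
    _ = 2 * ∑ i : Fin N, ∑ j : Fin N, (if i < j then f i j else 0) := by
        rw [Finset.sum_comm (f := fun i j => if j < i then f i j else 0)]
        simp_rw [fun i j => hsymm j i]
        ring

theorem stmt_7 (N r : ℕ) (X Y : Matrix (Fin N) (Fin r) ℝ) :
    ∑ i : Fin N, ∑ j : Fin N,
      (if i < j then
        (Xᵀ * (calE N i j)ᵀ * Y).trace * (Xᵀ * (calE N i j) * Y).trace
      else 0)
      = -frob (skewPart (X * Yᵀ)) (skewPart (X * Yᵀ)) := by
  set M := X * Yᵀ with hM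
  have hsq : (Real.sqrt 2 / 2) * (Real.sqrt 2 / 2) = 1 / 2 := by
    rw [div_mul_div_comm, Real.mul_self_sqrt (by norm_num)]; norm_num
  have hterm : ∀ i j : Fin N,
      (Xᵀ * (calE N i j)ᵀ * Y).trace * (Xᵀ * (calE N i j) * Y).trace
        = -((1/2) * (M i j - M j i)^2) := by
    intro i j
    rw [calE_transpose]
    simp only [Matrix.mul_neg, Matrix.neg_mul, Matrix.trace_neg, trace_calE, ← hM]
    rw [neg_mul]
    rw [show (Real.sqrt 2 / 2 * (M i j - M j i)) * (Real.sqrt 2 / 2 * (M i j - M j i))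
        = (Real.sqrt 2 / 2 * (Real.sqrt 2 / 2)) * (M i j - M j i)^2 by ring, hsq]
  have hrhs : frob (skewPart M) (skewPart M)
      = ∑ i : Fin N, ∑ j : Fin N, (1/4) * (M i j - M j i)^2 := by
    simp only [frob, skewPart, Matrix.trace, Matrix.diag, Matrix.mul_apply,
      Matrix.transpose_apply, Matrix.smul_apply, Matrix.sub_apply, smul_eq_mul]
    rw [Finset.sum_comm]
    apply Finset.sum_congr rfl; intro i _
    apply Finset.sum_congr rfl; intro j _
    ring
  have hf : ∑ i : Fin N, ∑ j : Fin N, (1/4) * (M i j - M j i)^2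
      = 2 * ∑ i : Fin N, ∑ j : Fin N,
          (if i < j then (1/4) * (M i j - M j i)^2 else 0) := by
    apply double_sum_lt
    · intro i j; ring
    · intro i; ring
  simp only [hterm]
  rw [hrhs, hf]
  have key : ∀ i j : Fin N,
      (if i < j then -((1/2) * (M i j - M j i)^2) else 0)
        = (-2) * (if i < j then (1/4) * (M i j - M j i)^2 else 0) := by
    intro i j; split <;> ring
  simp_rw [key, ← Finset.mul_sum]
  ring
end

section
/- For symmetric matrices X, Y ∈ ℝ^{N×N}, the sum over all pairs (i,j) with 1 ≤ i < j ≤ N of tr[(ℰ_{ij}X − Xℰ_{ij})(ℰ_{ij}Y − Yℰ_{ij})] equals N·tr(XY) − tr(X)·tr(Y). -/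
open Matrix BigOperators

lemma sum_ite_const' {α β : Type*} [Fintype α] [AddCommMonoid β] {c : Prop} [Decidable c]
    (f : α → β) : ∑ x : α, (if c then f x else 0) = if c then ∑ x : α, f x else 0 := by
  split <;> simp

lemma calE_entry {N : ℕ} {i j : Fin N} (hij : i ≠ j) (X : Matrix (Fin N) (Fin N) ℝ)
    (a b : Fin N) :
    (calE N i j * X - X * calE N i j) a b = (Real.sqrt 2/2) *
      ((if a = i then X j b else 0) - (if a = j then X i b else 0)
        - (if b = j then X a i else 0) + (if b = i then X a j else 0)) := by
  by_cases hai : a = i <;> by_cases haj : a = j <;> by_cases hbi : b = i <;> by_cases hbj : b = j <;>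
    simp_all [calE, Matrix.smul_mul, Matrix.mul_smul, Matrix.sub_apply, Matrix.smul_apply,
      Matrix.sub_mul, Matrix.mul_sub, hij.symm] <;> ring

lemma calE_trace {N : ℕ} (X Y : Matrix (Fin N) (Fin N) ℝ) {i j : Fin N} (hij : i ≠ j) :
    ((calE N i j * X - X * calE N i j) * (calE N i j * Y - Y * calE N i j)).trace =
      X j i * Y j i + X i j * Y i j - X i i * Y j j - X j j * Y i i
        + ∑ x, 1/2 * (X i x * Y x i) + ∑ x, 1/2 * (X j x * Y x j)
        + ∑ x, 1/2 * (X x i * Y i x) + ∑ x, 1/2 * (X x j * Y j x) := by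
  have h2 : Real.sqrt 2 / 2 * (Real.sqrt 2 / 2) = 1/2 := by
    rw [div_mul_div_comm, Real.mul_self_sqrt (by norm_num)]; norm_num
  have hc : ∀ F G : ℝ, (Real.sqrt 2/2 * F) * (Real.sqrt 2/2 * G) = 1/2 * (F * G) := by
    intro F G; rw [mul_mul_mul_comm, h2]
  simp only [Matrix.trace, Matrix.diag_apply, Matrix.mul_apply, calE_entry hij X, calE_entry hij Y]
  simp only [hc]
  simp only [sub_mul, mul_sub, add_mul, mul_add, ite_mul, mul_ite, zero_mul, mul_zero,
    Finset.sum_sub_distrib, Finset.sum_add_distrib, Finset.sum_ite_eq, Finset.sum_ite_eq',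
    Finset.mem_univ, if_true, hij, hij.symm, if_false, Finset.sum_const_zero, sub_zero, zero_sub,
    add_zero, zero_add, sum_ite_const']
  ring

theorem stmt_11 (N : ℕ) (X Y : Matrix (Fin N) (Fin N) ℝ)
    (hX : Xᵀ = X) (hY : Yᵀ = Y) :
    ∑ i : Fin N, ∑ j : Fin N,
      (if i < j then
        ((calE N i j * X - X * calE N i j) * (calE N i j * Y - Y * calE N i j)).trace
      else 0)
      = (N : ℝ) * (X * Y).trace - X.trace * Y.trace := by
  have hX' : ∀ a b, X a b = X b a := fun a b => by
    conv_lhs => rw [← hX, Matrix.transpose_apply]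
  have hY' : ∀ a b, Y a b = Y b a := fun a b => by
    conv_lhs => rw [← hY, Matrix.transpose_apply]
  obtain ⟨g, hg⟩ : ∃ g : Fin N → Fin N → ℝ, g = fun i j =>
      2 * (X i j * Y i j) - X i i * Y j j - X j j * Y i i + (X * Y) i i + (X * Y) j j := ⟨_, rfl⟩
  have hmulXY : ∀ a, (X * Y) a a = ∑ x, X a x * Y x a := fun a => Matrix.mul_apply
  have hkey : ∀ i j : Fin N, i ≠ j →
      ((calE N i j * X - X * calE N i j) * (calE N i j * Y - Y * calE N i j)).trace = g i j := by
    intro i j hij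
    rw [calE_trace X Y hij, hg]
    have e1 : ∑ x, 1/2 * (X i x * Y x i) = 1/2 * (X * Y) i i := by
      rw [hmulXY, Finset.mul_sum]
    have e2 : ∑ x, 1/2 * (X j x * Y x j) = 1/2 * (X * Y) j j := by
      rw [hmulXY, Finset.mul_sum]
    have e3 : ∑ x, 1/2 * (X x i * Y i x) = 1/2 * (X * Y) i i := by
      rw [hmulXY, Finset.mul_sum]
      exact Finset.sum_congr rfl fun x _ => by rw [hX' x i, hY' i x]
    have e4 : ∑ x, 1/2 * (X x j * Y j x) = 1/2 * (X * Y) j j := by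
      rw [hmulXY, Finset.mul_sum]
      exact Finset.sum_congr rfl fun x _ => by rw [hX' x j, hY' j x]
    rw [e1, e2, e3, e4, hX' j i, hY' j i]
    ring
  have hgsymm : ∀ i j, g i j = g j i := by
    intro i j; simp only [hg]; rw [hX' i j, hY' i j]; ring
  have hL : ∑ i : Fin N, ∑ j : Fin N,
      (if i < j then
        ((calE N i j * X - X * calE N i j) * (calE N i j * Y - Y * calE N i j)).trace
      else 0) = ∑ i : Fin N, ∑ j : Fin N, (if i < j then g i j else 0) := by
    refine Finset.sum_congr rfl fun i _ => Finset.sum_congr rfl fun j _ => ?_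
    by_cases h : i < j
    · rw [if_pos h, if_pos h, hkey i j h.ne]
    · rw [if_neg h, if_neg h]
  rw [hL]
  have tri : ∀ i j : Fin N, (if i < j then g i j else 0) + (if j < i then g i j else 0)
      + (if i = j then g i j else 0) = g i j := by
    intro i j
    rcases lt_trichotomy i j with h | h | h
    · simp [h, h.ne, h.asymm]
    · simp [h, lt_irrefl]
    · simp [h, h.ne', h.asymm]
  have expand : ∑ i : Fin N, ∑ j : Fin N, ((if i < j then g i j else 0)
      + (if j < i then g i j else 0) + (if i = j then g i j else 0))
      = ∑ i : Fin N, ∑ j : Fin N, g i j :=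
    Finset.sum_congr rfl fun i _ => Finset.sum_congr rfl fun j _ => tri i j
  have hsplit : (∑ i : Fin N, ∑ j : Fin N, (if i < j then g i j else 0))
      + (∑ i : Fin N, ∑ j : Fin N, (if j < i then g i j else 0))
      + (∑ i : Fin N, g i i) = ∑ i : Fin N, ∑ j : Fin N, g i j := by
    rw [← expand]
    simp only [Finset.sum_add_distrib, Finset.sum_ite_eq, Finset.mem_univ, if_true]
  have hswap : (∑ i : Fin N, ∑ j : Fin N, (if j < i then g i j else 0))
      = ∑ i : Fin N, ∑ j : Fin N, (if i < j then g i j else 0) := by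
    rw [Finset.sum_comm]
    exact Finset.sum_congr rfl fun i _ => Finset.sum_congr rfl fun j _ => by rw [hgsymm]
  have t1 : ∑ i : Fin N, ∑ j : Fin N, 2 * (X i j * Y i j) = 2 * (X * Y).trace := by
    rw [Matrix.trace, Finset.mul_sum]
    refine Finset.sum_congr rfl fun i _ => ?_
    rw [Matrix.diag_apply, hmulXY, Finset.mul_sum]
    exact Finset.sum_congr rfl fun j _ => by rw [hY' i j]
  have t2 : ∑ i : Fin N, ∑ j : Fin N, X i i * Y j j = X.trace * Y.trace := by
    rw [Matrix.trace, Matrix.trace, Finset.sum_mul_sum]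
    rfl
  have t3 : ∑ i : Fin N, ∑ j : Fin N, X j j * Y i i = X.trace * Y.trace := by
    rw [Finset.sum_comm]; exact t2
  have t4 : ∑ i : Fin N, ∑ _j : Fin N, (X * Y) i i = (N : ℝ) * (X * Y).trace := by
    simp only [Finset.sum_const, Finset.card_univ, Fintype.card_fin, nsmul_eq_mul]
    rw [Matrix.trace, Finset.mul_sum]
    rfl
  have t5 : ∑ _i : Fin N, ∑ j : Fin N, (X * Y) j j = (N : ℝ) * (X * Y).trace := by
    simp only [Finset.sum_const, Finset.card_univ, Fintype.card_fin, nsmul_eq_mul]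
    rw [Matrix.trace]
    rfl
  have htotal : ∑ i : Fin N, ∑ j : Fin N, g i j
      = 2 * (X * Y).trace - 2 * (X.trace * Y.trace) + 2 * (N : ℝ) * (X * Y).trace := by
    simp only [hg]
    simp only [Finset.sum_add_distrib, Finset.sum_sub_distrib]
    rw [t1, t2, t3, t4, t5]
    ring
  have hdiag : ∑ i : Fin N, g i i = 2 * (X * Y).trace := by
    simp only [hg]
    rw [Finset.sum_congr rfl fun i (_ : i ∈ Finset.univ) =>
      (by ring : 2 * (X i i * Y i i) - X i i * Y i i - X i i * Y i i + (X*Y) i i + (X*Y) i i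
        = 2 * (X*Y) i i), ← Finset.mul_sum, Matrix.trace]
    rfl
  have hfin : 2 * (∑ i : Fin N, ∑ j : Fin N, (if i < j then g i j else 0))
      = (∑ i : Fin N, ∑ j : Fin N, g i j) - ∑ i : Fin N, g i i := by
    rw [← hsplit, hswap]; ring
  rw [htotal, hdiag] at hfin
  linarith [hfin]
end

section
/- Let ψ : ℝ → ℝ be twice continuously differentiable, and let X, Y ∈ ℝ^{N×N} be symmetric positive definite matrices. For each pair (i,j) with 1 ≤ i ≤ N, 1 ≤ j ≤ N define f_{ij}(t,t') := ψ(‖exp(t·E_{ij})ᵀ X exp(t·E_{ij}) − exp(t'·E_{ij})ᵀ Y exp(t'·E_{ij})‖²_F), where exp is the matrix exponential. Then the sum over all pairs (i,j) of the mixed partial derivative −∂²f_{ij}/∂t∂t' evaluated at (t,t') = (0,0) equals 4(N+1)·ψ'(‖X−Y‖²_F)·tr(XY) + 16·ψ''(‖X−Y‖²_F)·⟨X(X−Y), Y(X−Y)⟩_F. -/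
open Matrix BigOperators

/-- The `N × N` matrix with a `1` in entry `(i,j)` and `0` elsewhere. -/
def Eb (N : ℕ) (i j : Fin N) : Matrix (Fin N) (Fin N) ℝ :=
  Matrix.single i j 1

/-- The squared Frobenius norm `‖A‖²_F = ⟨A,A⟩_F`. -/
noncomputable def frobSq {N r : ℕ} (A : Matrix (Fin N) (Fin r) ℝ) : ℝ := frob A A

lemma frob_eq_sum {N : ℕ} (A B : Matrix (Fin N) (Fin N) ℝ) :
    frob A B = ∑ k, ∑ l, A k l * B k l := by
  simp only [frob, Matrix.trace, Matrix.diag, Matrix.mul_apply, Matrix.transpose_apply]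
  exact Finset.sum_comm

lemma frob_neg {N : ℕ} (A B : Matrix (Fin N) (Fin N) ℝ) : frob A (-B) = -frob A B := by
  simp [frob, Matrix.mul_neg]

lemma Eb_apply {N : ℕ} (i j a b : Fin N) :
    Eb N i j a b = if i = a ∧ j = b then 1 else 0 := by
  simp only [Eb, Matrix.single, Matrix.of_apply]

lemma conj_entry {N : ℕ} (i j k l : Fin N) (B : Matrix (Fin N) (Fin N) ℝ) :
    ((Eb N i j)ᵀ * B + B * Eb N i j) k l
      = (if j = k then B i l else 0) + (if j = l then B k i else 0) := by
  have e1 : ((Eb N i j)ᵀ * B) k l = if j = k then B i l else 0 := by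
    simp only [Matrix.mul_apply, Matrix.transpose_apply, Eb_apply, ite_mul, one_mul, zero_mul]
    by_cases hjk : j = k
    · simp [hjk]
    · simp [hjk]
  have e2 : (B * Eb N i j) k l = if j = l then B k i else 0 := by
    simp only [Matrix.mul_apply, Eb_apply, mul_ite, mul_one, mul_zero]
    by_cases hjl : j = l
    · simp [hjl]
    · simp [hjl]
  simp [Matrix.add_apply, e1, e2]

lemma frob_sym_conj {N : ℕ} (i j : Fin N) (A B : Matrix (Fin N) (Fin N) ℝ)
    (hA : ∀ a b, A a b = A b a) (hB : ∀ a b, B a b = B b a) :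
    frob A ((Eb N i j)ᵀ * B + B * Eb N i j) = 2 * (B * A) i j := by
  rw [frob_eq_sum]
  simp only [conj_entry, mul_add, Finset.sum_add_distrib, mul_ite, mul_zero]
  rw [Finset.sum_comm]
  simp only [Finset.sum_ite_eq, Finset.mem_univ, if_true]
  have t1 : ∑ l, A j l * B i l = (B * A) i j := by
    rw [Matrix.mul_apply]
    exact Finset.sum_congr rfl fun l _ => by rw [hA j l, mul_comm]
  have t2 : ∑ k, A k j * B k i = (B * A) i j := by
    rw [Matrix.mul_apply]
    exact Finset.sum_congr rfl fun k _ => by rw [hB k i, mul_comm]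
  rw [t1, t2]; ring

lemma sum_frob_cross {N : ℕ} (X Y : Matrix (Fin N) (Fin N) ℝ)
    (hX : ∀ a b, X a b = X b a) (hY : ∀ a b, Y a b = Y b a) :
    ∑ i : Fin N, ∑ j : Fin N,
      frob ((Eb N i j)ᵀ * X + X * Eb N i j) ((Eb N i j)ᵀ * Y + Y * Eb N i j)
      = 2 * ((N : ℝ) + 1) * (X * Y).trace := by
  have point : ∀ i j : Fin N,
      frob ((Eb N i j)ᵀ * X + X * Eb N i j) ((Eb N i j)ᵀ * Y + Y * Eb N i j)
        = (∑ l, X i l * Y i l) + X i j * Y j i + X j i * Y i j + (∑ k, X k i * Y k i) := by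
    intro i j
    rw [frob_eq_sum]
    simp only [conj_entry, add_mul, mul_add, ite_zero_mul_ite_zero, Finset.sum_add_distrib]
    have s11 : ∑ k, ∑ l, (if j = k ∧ j = k then X i l * Y i l else 0) = ∑ l, X i l * Y i l := by
      simp only [and_self]
      rw [Finset.sum_comm]
      simp [Finset.sum_ite_eq]
    have s12 : ∑ k, ∑ l, (if j = k ∧ j = l then X i l * Y k i else 0) = X i j * Y j i := by
      simp only [ite_and]
      simp [Finset.sum_ite_eq]
    have s21 : ∑ k, ∑ l, (if j = l ∧ j = k then X k i * Y i l else 0) = X j i * Y i j := by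
      simp only [ite_and]
      rw [Finset.sum_comm]
      simp [Finset.sum_ite_eq]
    have s22 : ∑ k, ∑ l, (if j = l ∧ j = l then X k i * Y k i else 0) = ∑ k, X k i * Y k i := by
      simp only [and_self]
      simp [Finset.sum_ite_eq]
    rw [s11, s12, s21, s22]
    ring
  simp only [point]
  have trX : ∀ i : Fin N, (∑ l, X i l * Y i l) = (X * Y) i i := by
    intro i; rw [Matrix.mul_apply]
    exact Finset.sum_congr rfl fun l _ => by rw [hY l i]
  have trK : ∀ i : Fin N, (∑ k, X k i * Y k i) = (X * Y) i i := by
    intro i; rw [Matrix.mul_apply]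
    exact Finset.sum_congr rfl fun k _ => by rw [hX i k, hY k i]
  have sXY : ∀ i : Fin N, (∑ j, X i j * Y j i) = (X * Y) i i := fun i => (Matrix.mul_apply).symm
  have sYX : ∀ i : Fin N, (∑ j, X j i * Y i j) = (X * Y) i i := by
    intro i
    rw [Matrix.mul_apply]
    exact Finset.sum_congr rfl fun j _ => by rw [hX j i, hY i j]
  have step : ∀ i : Fin N,
      (∑ j : Fin N, ((∑ l, X i l * Y i l) + X i j * Y j i + X j i * Y i j + ∑ k, X k i * Y k i))
      = 2 * ((N : ℝ) + 1) * (X * Y) i i := by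
    intro i
    simp only [Finset.sum_add_distrib, Finset.sum_const, Finset.card_univ, Fintype.card_fin,
      nsmul_eq_mul, sXY i, sYX i, trX i, trK i]
    ring
  simp only [step]
  rw [show (X * Y).trace = ∑ i, (X * Y) i i from rfl, Finset.mul_sum]

section Aux

attribute [local instance] Matrix.linftyOpNormedAddCommGroup Matrix.linftyOpNormedRing
  Matrix.linftyOpNormedAlgebra

variable {N : ℕ}

lemma hasDerivAt_entry {c : ℝ → Matrix (Fin N) (Fin N) ℝ} {c' : Matrix (Fin N) (Fin N) ℝ}
    {t : ℝ} (h : HasDerivAt c c' t) (k l : Fin N) :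
    HasDerivAt (fun s => c s k l) (c' k l) t := by
  let L : Matrix (Fin N) (Fin N) ℝ →ₗ[ℝ] ℝ :=
    { toFun := fun M => M k l, map_add' := fun _ _ => rfl, map_smul' := fun _ _ => rfl }
  have := (LinearMap.toContinuousLinearMap L).hasFDerivAt (x := c t) |>.comp_hasDerivAt t h
  exact this

lemma hasDerivAt_transpose {c : ℝ → Matrix (Fin N) (Fin N) ℝ} {c' : Matrix (Fin N) (Fin N) ℝ}
    {t : ℝ} (h : HasDerivAt c c' t) :
    HasDerivAt (fun s => (c s)ᵀ) c'ᵀ t := by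
  let L : Matrix (Fin N) (Fin N) ℝ →ₗ[ℝ] Matrix (Fin N) (Fin N) ℝ :=
    { toFun := fun M => Mᵀ, map_add' := fun _ _ => rfl, map_smul' := fun _ _ => rfl }
  have := (LinearMap.toContinuousLinearMap L).hasFDerivAt (x := c t) |>.comp_hasDerivAt t h
  exact this

lemma hasDerivAt_conj (E A : Matrix (Fin N) (Fin N) ℝ) :
    HasDerivAt (fun t : ℝ => (NormedSpace.exp (t • E))ᵀ * A * NormedSpace.exp (t • E))
      (Eᵀ * A + A * E) 0 := by
  have hexp : HasDerivAt (fun t : ℝ => NormedSpace.exp (t • E)) E 0 := by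
    have h := hasDerivAt_exp_smul_const (𝕂 := ℝ) E 0
    simp at h
    exact h
  have hT : HasDerivAt (fun t : ℝ => (NormedSpace.exp (t • E))ᵀ) Eᵀ 0 :=
    hasDerivAt_transpose hexp
  have := (hT.mul_const A).mul hexp
  simp at this
  exact this

lemma HasDerivAt.frob_const {c : ℝ → Matrix (Fin N) (Fin N) ℝ} {c' : Matrix (Fin N) (Fin N) ℝ}
    {t : ℝ} (h : HasDerivAt c c' t) (B : Matrix (Fin N) (Fin N) ℝ) :
    HasDerivAt (fun s => frob (c s) B) (frob c' B) t := by
  simp only [frob_eq_sum]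
  exact HasDerivAt.fun_sum fun k _ => HasDerivAt.fun_sum fun l _ => (hasDerivAt_entry h k l).mul_const _

lemma HasDerivAt.frobSq_comp {c : ℝ → Matrix (Fin N) (Fin N) ℝ} {c' : Matrix (Fin N) (Fin N) ℝ}
    {t : ℝ} (h : HasDerivAt c c' t) :
    HasDerivAt (fun s => frobSq (c s)) (2 * frob (c t) c') t := by
  simp only [frobSq, frob_eq_sum]
  have key : ∀ k ∈ Finset.univ, ∀ l ∈ (Finset.univ : Finset (Fin N)),
      HasDerivAt (fun s => c s k l * c s k l) (c' k l * c t k l + c t k l * c' k l) t :=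
    fun k _ l _ => (hasDerivAt_entry h k l).mul (hasDerivAt_entry h k l)
  have := HasDerivAt.fun_sum (fun k hk => HasDerivAt.fun_sum (key k hk))
  refine this.congr_deriv (Eq.symm ?_)
  rw [Finset.mul_sum]
  refine Finset.sum_congr rfl fun k _ => ?_
  rw [Finset.mul_sum]
  exact Finset.sum_congr rfl fun l _ => by ring

lemma key_lemma (ψ : ℝ → ℝ) (hψ1 : Differentiable ℝ ψ) (hψ2 : Differentiable ℝ (deriv ψ))
    (X Y : Matrix (Fin N) (Fin N) ℝ)
    (hXs : ∀ a b, X a b = X b a) (hYs : ∀ a b, Y a b = Y b a)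
    (i j : Fin N) (g : ℝ → ℝ → ℝ)
    (hg : ∀ t t', g t t' =
      ψ (frobSq ((NormedSpace.exp (t • Eb N i j))ᵀ * X * NormedSpace.exp (t • Eb N i j) -
                 (NormedSpace.exp (t' • Eb N i j))ᵀ * Y * NormedSpace.exp (t' • Eb N i j)))) :
    -(deriv (fun t => deriv (fun t' => g t t') 0) 0)
      = 16 * deriv (deriv ψ) (frobSq (X - Y)) * ((X * (X - Y)) i j * (Y * (X - Y)) i j)
        + 2 * deriv ψ (frobSq (X - Y)) *
          frob ((Eb N i j)ᵀ * X + X * Eb N i j) ((Eb N i j)ᵀ * Y + Y * Eb N i j) := by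
  have hXYs : ∀ a b, (X - Y) a b = (X - Y) b a := by
    intro a b; simp [Matrix.sub_apply, hXs a b, hYs a b]
  set E : Matrix (Fin N) (Fin N) ℝ := Eb N i j with hE
  set cX : ℝ → Matrix (Fin N) (Fin N) ℝ :=
    fun t => (NormedSpace.exp (t • E))ᵀ * X * NormedSpace.exp (t • E) with hcX
  set cY : ℝ → Matrix (Fin N) (Fin N) ℝ :=
    fun t => (NormedSpace.exp (t • E))ᵀ * Y * NormedSpace.exp (t • E) with hcY
  set Dx : Matrix (Fin N) (Fin N) ℝ := Eᵀ * X + X * E with hDx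
  set Dy : Matrix (Fin N) (Fin N) ℝ := Eᵀ * Y + Y * E with hDy
  have hcX0 : cX 0 = X := by simp [hcX]
  have hcY0 : cY 0 = Y := by simp [hcY]
  have claim1 : (fun t => deriv (fun t' => g t t') 0)
      = fun t => deriv ψ (frobSq (cX t - Y)) * (2 * frob (cX t - Y) (-Dy)) := by
    funext t
    have hY' : HasDerivAt (fun t' => cX t - cY t') (-Dy) 0 :=
      (hasDerivAt_conj E Y).const_sub (cX t)
    have h3 := ((hψ1 _).hasDerivAt).comp 0 hY'.frobSq_comp
    simp only [hcY0] at h3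
    simp only [hg]
    exact h3.deriv
  rw [claim1]
  have D1 : HasDerivAt (fun t => cX t - Y) Dx 0 := (hasDerivAt_conj E X).sub_const Y
  have h2 := ((hψ2 _).hasDerivAt).comp 0 D1.frobSq_comp
  simp only [hcX0] at h2
  have h3 : HasDerivAt (fun t => 2 * frob (cX t - Y) (-Dy)) (2 * frob Dx (-Dy)) 0 :=
    (D1.frob_const (-Dy)).const_mul 2
  have hD := h2.mul h3
  simp only [Function.comp, hcX0] at hD
  rw [show (fun t => deriv ψ (frobSq (cX t - Y)) * (2 * frob (cX t - Y) (-Dy))) =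
      ((deriv ψ ∘ fun s => frobSq (cX s - Y)) * fun t => 2 * frob (cX t - Y) (-Dy)) from rfl,
    hD.deriv]
  have e1 : frob (X - Y) Dx = 2 * (X * (X - Y)) i j :=
    frob_sym_conj i j (X - Y) X hXYs hXs
  have e2 : frob (X - Y) Dy = 2 * (Y * (X - Y)) i j :=
    frob_sym_conj i j (X - Y) Y hXYs hYs
  rw [frob_neg, frob_neg, e1, e2]
  ring

end Aux

theorem stmt_16 (N : ℕ) (ψ : ℝ → ℝ) (hψ : ContDiff ℝ 2 ψ)
    (X Y : Matrix (Fin N) (Fin N) ℝ)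
    (hX : X.PosDef) (hY : Y.PosDef)
    (f : Fin N → Fin N → ℝ → ℝ → ℝ)
    (hf : ∀ i j t t', f i j t t' =
      ψ (frobSq ((NormedSpace.exp (t • Eb N i j))ᵀ * X * NormedSpace.exp (t • Eb N i j) -
                 (NormedSpace.exp (t' • Eb N i j))ᵀ * Y * NormedSpace.exp (t' • Eb N i j)))) :
    ∑ i : Fin N, ∑ j : Fin N,
      -(deriv (fun t => deriv (fun t' => f i j t t') 0) 0)
      = 4 * ((N : ℝ) + 1) * deriv ψ (frobSq (X - Y)) * (X * Y).trace
        + 16 * deriv (deriv ψ) (frobSq (X - Y)) * frob (X * (X - Y)) (Y * (X - Y)) := by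
  have hψ1 : Differentiable ℝ ψ := hψ.differentiable (by norm_num)
  have hψ2 : Differentiable ℝ (deriv ψ) := by
    have h2 : ContDiff ℝ ((1 : ℕ) + 1) ψ := by norm_num; exact hψ
    have := (contDiff_succ_iff_deriv.mp h2).2.2
    exact this.differentiable (by norm_num)
  have hXs : ∀ a b, X a b = X b a := by
    intro a b
    have h : X b a = X a b := by simpa using congrFun (congrFun hX.1.eq a) b
    exact h.symm
  have hYs : ∀ a b, Y a b = Y b a := by
    intro a b
    have h : Y b a = Y a b := by simpa using congrFun (congrFun hY.1.eq a) b
    exact h.symm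
  have key : ∀ i j : Fin N,
      -(deriv (fun t => deriv (fun t' => f i j t t') 0) 0)
      = 16 * deriv (deriv ψ) (frobSq (X - Y)) * ((X * (X - Y)) i j * (Y * (X - Y)) i j)
        + 2 * deriv ψ (frobSq (X - Y)) *
          frob ((Eb N i j)ᵀ * X + X * Eb N i j) ((Eb N i j)ᵀ * Y + Y * Eb N i j) :=
    fun i j => key_lemma ψ hψ1 hψ2 X Y hXs hYs i j (f i j) (hf i j)
  simp only [key]
  simp only [Finset.sum_add_distrib]
  have S1 : (∑ i : Fin N, ∑ j : Fin N,
      16 * deriv (deriv ψ) (frobSq (X - Y)) * ((X * (X - Y)) i j * (Y * (X - Y)) i j))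
      = 16 * deriv (deriv ψ) (frobSq (X - Y)) * frob (X * (X - Y)) (Y * (X - Y)) := by
    rw [frob_eq_sum, Finset.mul_sum]
    exact Finset.sum_congr rfl fun i _ => by rw [Finset.mul_sum]
  have S2 : (∑ i : Fin N, ∑ j : Fin N,
      2 * deriv ψ (frobSq (X - Y)) *
        frob ((Eb N i j)ᵀ * X + X * Eb N i j) ((Eb N i j)ᵀ * Y + Y * Eb N i j))
      = 2 * deriv ψ (frobSq (X - Y)) * (2 * ((N : ℝ) + 1) * (X * Y).trace) := by
    rw [← sum_frob_cross X Y hXs hYs, Finset.mul_sum]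
    exact Finset.sum_congr rfl fun i _ => by rw [Finset.mul_sum]
  rw [S1, S2]
  ring
end
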